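/- arXiv:2112.13211 — 5 statements merged into one kernel-verified Lean document; each statement's English description precedes it below -/
import Mathlib

section
/- In the braid group B₅ with generators σ₁,…,σ₄, letting τ = σ₁σ₂σ₃σ₄ and Δ the positive half-twist (so Δ² is the full twist, which is central), one has (σ₃⁻¹σ₄⁻¹σ₂⁻¹)(Δ²τ²)(σ₂σ₄σ₃) = Δ²τ(σ₃σ₄)(σ₄σ₃); in particular Δ²τσ₃σ₄σ₄σ₃ is conjugate to Δ²τ². -/
/-- In B₅ (abstractly: σ₁,…,σ₄ satisfying the braid relations and z a central
element playing the role of the full twist Δ²), with τ = σ₁σ₂σ₃σ₄ one has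
(σ₃⁻¹σ₄⁻¹σ₂⁻¹)(Δ²τ²)(σ₂σ₄σ₃) = Δ²τ(σ₃σ₄)(σ₄σ₃); in particular
Δ²τσ₃σ₄σ₄σ₃ is conjugate to Δ²τ². -/
theorem B5_conjugate {G : Type*} [Group G] (σ₁ σ₂ σ₃ σ₄ z : G)
    (h12 : σ₁ * σ₂ * σ₁ = σ₂ * σ₁ * σ₂)
    (h23 : σ₂ * σ₃ * σ₂ = σ₃ * σ₂ * σ₃)
    (h34 : σ₃ * σ₄ * σ₃ = σ₄ * σ₃ * σ₄)
    (h13 : σ₁ * σ₃ = σ₃ * σ₁)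
    (h14 : σ₁ * σ₄ = σ₄ * σ₁)
    (h24 : σ₂ * σ₄ = σ₄ * σ₂)
    (hz : ∀ g : G, z * g = g * z)
    (τ : G) (hτ : τ = σ₁ * σ₂ * σ₃ * σ₄) :
    σ₃⁻¹ * σ₄⁻¹ * σ₂⁻¹ * (z * τ ^ 2) * (σ₂ * σ₄ * σ₃) =
        z * τ * (σ₃ * σ₄) * (σ₄ * σ₃) ∧
      IsConj (z * τ ^ 2) (z * τ * (σ₃ * σ₄) * (σ₄ * σ₃)) := by
  -- right-associated versions of the relations, with a free tail `g`
  have b12 : ∀ g : G, σ₁ * (σ₂ * (σ₁ * g)) = σ₂ * (σ₁ * (σ₂ * g)) := fun g => by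
    rw [← mul_assoc, ← mul_assoc, h12, mul_assoc, mul_assoc]
  have b23 : ∀ g : G, σ₂ * (σ₃ * (σ₂ * g)) = σ₃ * (σ₂ * (σ₃ * g)) := fun g => by
    rw [← mul_assoc, ← mul_assoc, h23, mul_assoc, mul_assoc]
  have b34 : ∀ g : G, σ₃ * (σ₄ * (σ₃ * g)) = σ₄ * (σ₃ * (σ₄ * g)) := fun g => by
    rw [← mul_assoc, ← mul_assoc, h34, mul_assoc, mul_assoc]
  have c13 : ∀ g : G, σ₁ * (σ₃ * g) = σ₃ * (σ₁ * g) := fun g => by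
    rw [← mul_assoc, h13, mul_assoc]
  have c14 : ∀ g : G, σ₁ * (σ₄ * g) = σ₄ * (σ₁ * g) := fun g => by
    rw [← mul_assoc, h14, mul_assoc]
  have c24 : ∀ g : G, σ₂ * (σ₄ * g) = σ₄ * (σ₂ * g) := fun g => by
    rw [← mul_assoc, h24, mul_assoc]
  -- the key positive-word identity:  τ²·σ₂σ₄σ₃·g = σ₂σ₄σ₃·τ·σ₃σ₄σ₄σ₃·g
  have key : ∀ g : G,
      σ₁ * (σ₂ * (σ₃ * (σ₄ * (σ₁ * (σ₂ * (σ₃ * (σ₄ * (σ₂ * (σ₄ * (σ₃ * g)))))))))) =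
      σ₂ * (σ₄ * (σ₃ * (σ₁ * (σ₂ * (σ₃ * (σ₄ * (σ₃ * (σ₄ * (σ₄ * (σ₃ * g)))))))))) := by
    intro g
    -- LHS: 1 2 3 4 1 2 3 4 2 4 3 → 1 2 3 4 1 2 3 2 4 4 3 → 1 2 3 4 1 3 2 3 4 4 3
    conv_lhs => rw [show σ₄ * (σ₂ * (σ₄ * (σ₃ * g))) = σ₂ * (σ₄ * (σ₄ * (σ₃ * g))) from
      (c24 _).symm]
    conv_lhs => rw [show σ₂ * (σ₃ * (σ₂ * (σ₄ * (σ₄ * (σ₃ * g))))) =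
      σ₃ * (σ₂ * (σ₃ * (σ₄ * (σ₄ * (σ₃ * g))))) from b23 _]
    -- RHS: 2 4 3 1 2 3 4 3 4 4 3 → ... → 1 2 3 4 1 3 2 3 4 4 3
    conv_rhs => rw [show σ₃ * (σ₁ * (σ₂ * (σ₃ * (σ₄ * (σ₃ * (σ₄ * (σ₄ * (σ₃ * g)))))))) =
      σ₁ * (σ₃ * (σ₂ * (σ₃ * (σ₄ * (σ₃ * (σ₄ * (σ₄ * (σ₃ * g)))))))) from (c13 _).symm]
    conv_rhs => rw [show σ₄ * (σ₁ * (σ₃ * (σ₂ * (σ₃ * (σ₄ * (σ₃ * (σ₄ * (σ₄ * (σ₃ * g))))))))) =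
      σ₁ * (σ₄ * (σ₃ * (σ₂ * (σ₃ * (σ₄ * (σ₃ * (σ₄ * (σ₄ * (σ₃ * g))))))))) from (c14 _).symm]
    conv_rhs => rw [show σ₃ * (σ₂ * (σ₃ * (σ₄ * (σ₃ * (σ₄ * (σ₄ * (σ₃ * g))))))) =
      σ₂ * (σ₃ * (σ₂ * (σ₄ * (σ₃ * (σ₄ * (σ₄ * (σ₃ * g))))))) from (b23 _).symm]
    conv_rhs => rw [show σ₄ * (σ₂ * (σ₃ * (σ₂ * (σ₄ * (σ₃ * (σ₄ * (σ₄ * (σ₃ * g)))))))) =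
      σ₂ * (σ₄ * (σ₃ * (σ₂ * (σ₄ * (σ₃ * (σ₄ * (σ₄ * (σ₃ * g)))))))) from (c24 _).symm]
    conv_rhs => rw [show σ₂ * (σ₄ * (σ₃ * (σ₄ * (σ₄ * (σ₃ * g))))) =
      σ₄ * (σ₂ * (σ₃ * (σ₄ * (σ₄ * (σ₃ * g))))) from c24 _]
    conv_rhs => rw [show σ₄ * (σ₃ * (σ₄ * (σ₂ * (σ₃ * (σ₄ * (σ₄ * (σ₃ * g))))))) =
      σ₃ * (σ₄ * (σ₃ * (σ₂ * (σ₃ * (σ₄ * (σ₄ * (σ₃ * g))))))) from (b34 _).symm]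
    conv_rhs => rw [show σ₂ * (σ₁ * (σ₂ * (σ₃ * (σ₄ * (σ₃ * (σ₂ * (σ₃ * (σ₄ * (σ₄ * (σ₃ * g)))))))))) =
      σ₁ * (σ₂ * (σ₁ * (σ₃ * (σ₄ * (σ₃ * (σ₂ * (σ₃ * (σ₄ * (σ₄ * (σ₃ * g)))))))))) from (b12 _).symm]
    conv_rhs => rw [show σ₁ * (σ₃ * (σ₄ * (σ₃ * (σ₂ * (σ₃ * (σ₄ * (σ₄ * (σ₃ * g)))))))) =
      σ₃ * (σ₁ * (σ₄ * (σ₃ * (σ₂ * (σ₃ * (σ₄ * (σ₄ * (σ₃ * g)))))))) from c13 _]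
    conv_rhs => rw [show σ₁ * (σ₄ * (σ₃ * (σ₂ * (σ₃ * (σ₄ * (σ₄ * (σ₃ * g))))))) =
      σ₄ * (σ₁ * (σ₃ * (σ₂ * (σ₃ * (σ₄ * (σ₄ * (σ₃ * g))))))) from c14 _]
  -- main conjugation identity
  have eq2 : z * τ ^ 2 * (σ₂ * σ₄ * σ₃) =
      (σ₂ * σ₄ * σ₃) * (z * τ * (σ₃ * σ₄) * (σ₄ * σ₃)) := by
    subst hτ
    simp only [pow_two, mul_assoc, hz]
    rw [key]
  have main : (σ₂ * σ₄ * σ₃)⁻¹ * (z * τ ^ 2) * (σ₂ * σ₄ * σ₃) =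
      z * τ * (σ₃ * σ₄) * (σ₄ * σ₃) := by
    rw [mul_assoc, eq2, ← mul_assoc, inv_mul_cancel, one_mul]
  constructor
  · calc σ₃⁻¹ * σ₄⁻¹ * σ₂⁻¹ * (z * τ ^ 2) * (σ₂ * σ₄ * σ₃)
        = (σ₂ * σ₄ * σ₃)⁻¹ * (z * τ ^ 2) * (σ₂ * σ₄ * σ₃) := by
          simp [mul_inv_rev, mul_assoc]
      _ = z * τ * (σ₃ * σ₄) * (σ₄ * σ₃) := main
  · exact isConj_iff.mpr ⟨(σ₂ * σ₄ * σ₃)⁻¹, by rw [inv_inv]; exact main⟩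
end

section
/- Let G be a group, z a central element of G, and σ₁,…,σ_{2n} elements of G satisfying the braid relations of B_{2n+1}, with τ = σ₁⋯σ_{2n}. Then for n ≥ 1, the element zτ(σ_{n+1}σ_{n+2}⋯σ_{2n})(σ_{2n}σ_{2n−1}⋯σ_{n+1}) is conjugate in G to zτ². -/
section BraidConjAux

variable {G : Type*} [Group G]

/-- σ_a σ_{a+1} ⋯ σ_{a+k-1} -/
def braidUp (σ : ℕ → G) (a k : ℕ) : G :=
  ((List.range k).map fun i => σ (a + i)).prod

/-- σ_b σ_{b-1} ⋯ σ_{b-k+1} -/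
def braidDn (σ : ℕ → G) (b k : ℕ) : G :=
  ((List.range k).map fun i => σ (b - i)).prod

lemma braidUp_zero (σ : ℕ → G) (a : ℕ) : braidUp σ a 0 = 1 := rfl

lemma braidDn_zero (σ : ℕ → G) (b : ℕ) : braidDn σ b 0 = 1 := rfl

lemma braidUp_succ (σ : ℕ → G) (a k : ℕ) :
    braidUp σ a (k + 1) = braidUp σ a k * σ (a + k) := by
  simp [braidUp, List.range_succ]

lemma braidDn_succ (σ : ℕ → G) (b k : ℕ) :
    braidDn σ b (k + 1) = braidDn σ b k * σ (b - k) := by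
  simp [braidDn, List.range_succ]

lemma braidUp_cons (σ : ℕ → G) (a k : ℕ) :
    braidUp σ a (k + 1) = σ a * braidUp σ (a + 1) k := by
  induction k with
  | zero => simp [braidUp, List.range_succ]
  | succ k ih =>
      rw [braidUp_succ, ih, mul_assoc, show a + (k + 1) = (a + 1) + k by omega,
        ← braidUp_succ]

lemma braidUp_one (σ : ℕ → G) (a : ℕ) : braidUp σ a 1 = σ a := by
  simp [braidUp, List.range_succ]

lemma braidDn_one (σ : ℕ → G) (b : ℕ) : braidDn σ b 1 = σ b := by
  simp [braidDn, List.range_succ]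

lemma braidUp_append (σ : ℕ → G) (a j k : ℕ) :
    braidUp σ a (j + k) = braidUp σ a j * braidUp σ (a + j) k := by
  induction k with
  | zero => simp [braidUp_zero]
  | succ k ih =>
      rw [show j + (k + 1) = (j + k) + 1 by omega, braidUp_succ, ih,
        braidUp_succ, mul_assoc]
      congr 3
      omega

end BraidConjAux

section BraidConjMain

variable {G : Type*} [Group G] (n : ℕ) (σ : ℕ → G)

/-- small letter commutes with an increasing block of larger letters -/
lemma sig_comm_up
    (hbr2 : ∀ i j, 1 ≤ i → i ≤ 2 * n → 1 ≤ j → j ≤ 2 * n → i + 2 ≤ j →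
      σ i * σ j = σ j * σ i)
    {j a k : ℕ} (hj : 1 ≤ j) (hja : j + 2 ≤ a) (hak : a + k ≤ 2 * n + 1) :
    σ j * braidUp σ a k = braidUp σ a k * σ j := by
  induction k with
  | zero => simp [braidUp_zero]
  | succ k ih =>
      rw [braidUp_succ, ← mul_assoc, ih (by omega), mul_assoc,
        hbr2 j (a + k) hj (by omega) (by omega) (by omega) (by omega),
        ← mul_assoc]

/-- increasing block of small letters commutes with a larger letter -/
lemma up_comm_sig
    (hbr2 : ∀ i j, 1 ≤ i → i ≤ 2 * n → 1 ≤ j → j ≤ 2 * n → i + 2 ≤ j →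
      σ i * σ j = σ j * σ i)
    {j a k : ℕ} (h : a + k + 1 ≤ j) (hj : j ≤ 2 * n) (ha : 1 ≤ a) :
    braidUp σ a k * σ j = σ j * braidUp σ a k := by
  induction k with
  | zero => simp [braidUp_zero]
  | succ k ih =>
      rw [braidUp_succ, mul_assoc,
        hbr2 (a + k) j (by omega) (by omega) (by omega) hj (by omega),
        ← mul_assoc, ih (by omega), mul_assoc]

/-- small letter commutes with a decreasing block of larger letters -/
lemma sig_comm_dn
    (hbr2 : ∀ i j, 1 ≤ i → i ≤ 2 * n → 1 ≤ j → j ≤ 2 * n → i + 2 ≤ j →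
      σ i * σ j = σ j * σ i)
    {j b k : ℕ} (hj : 1 ≤ j) (h : j + k + 1 ≤ b) (hb : b ≤ 2 * n) :
    σ j * braidDn σ b k = braidDn σ b k * σ j := by
  induction k with
  | zero => simp [braidDn_zero]
  | succ k ih =>
      rw [braidDn_succ, ← mul_assoc, ih (by omega), mul_assoc,
        hbr2 j (b - k) hj (by omega) (by omega) (by omega) (by omega),
        ← mul_assoc]

/-- decreasing block of small letters commutes with a larger letter -/
lemma dn_comm_sig
    (hbr2 : ∀ i j, 1 ≤ i → i ≤ 2 * n → 1 ≤ j → j ≤ 2 * n → i + 2 ≤ j →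
      σ i * σ j = σ j * σ i)
    {j b k : ℕ} (h : b + 2 ≤ j) (hj : j ≤ 2 * n) (hkb : k ≤ b) :
    braidDn σ b k * σ j = σ j * braidDn σ b k := by
  induction k with
  | zero => simp [braidDn_zero]
  | succ k ih =>
      rw [braidDn_succ, mul_assoc,
        hbr2 (b - k) j (by omega) (by omega) (by omega) hj (by omega),
        ← mul_assoc, ih (by omega), mul_assoc]

/-- Lemma L: σ_a⋯σ_{a+e+1} · σ_{a+e-1}⋯σ_a = σ_{a+e}⋯σ_a · σ_{a+1}⋯σ_{a+e+1} -/
lemma lemmaL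
    (hbr1 : ∀ i, 1 ≤ i → i + 1 ≤ 2 * n →
      σ i * σ (i + 1) * σ i = σ (i + 1) * σ i * σ (i + 1))
    (hbr2 : ∀ i j, 1 ≤ i → i ≤ 2 * n → 1 ≤ j → j ≤ 2 * n → i + 2 ≤ j →
      σ i * σ j = σ j * σ i)
    (e : ℕ) : ∀ a : ℕ, 1 ≤ a → a + e + 1 ≤ 2 * n →
    braidUp σ a (e + 2) * braidDn σ (a + e - 1) e =
      braidDn σ (a + e) (e + 1) * braidUp σ (a + 1) (e + 1) := by
  induction e with
  | zero =>
      intro a ha h2n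
      simp [braidDn_zero, braidDn_one, braidUp_one, braidUp_succ, braidUp,
        List.range_succ]
  | succ e ih =>
      intro a ha h2n
      have key := ih (a + 1) (by omega) (by omega)
      rw [show a + 1 + e - 1 = a + e by omega] at key
      rw [show a + (e + 1) - 1 = a + e by omega,
        show a + (e + 1) = a + e + 1 by omega,
        show e + 1 + 2 = (e + 2) + 1 by omega,
        show e + 1 + 1 = e + 2 by omega]
      -- goal: up a (e+3) * dn (a+e) (e+1) = dn (a+e+1) (e+2) * up (a+1) (e+2)
      calc braidUp σ a (e + 2 + 1) * braidDn σ (a + e) (e + 1)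
          = σ a * (braidUp σ (a + 1) (e + 2) * braidDn σ (a + e) e) * σ a := by
            rw [braidUp_cons, braidDn_succ, show a + e - e = a by omega]; group
        _ = σ a * (braidDn σ (a + 1 + e) (e + 1) *
              braidUp σ (a + 1 + 1) (e + 1)) * σ a := by rw [key]
        _ = (σ a * braidDn σ (a + e + 1) e) * (σ (a + 1) *
              (braidUp σ (a + 2) (e + 1) * σ a)) := by
            rw [show a + 1 + e = a + e + 1 by omega, braidDn_succ,
              show a + e + 1 - e = a + 1 by omega,
              show a + 1 + 1 = a + 2 by omega]; group
        _ = (braidDn σ (a + e + 1) e * σ a) * (σ (a + 1) *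
              (σ a * braidUp σ (a + 2) (e + 1))) := by
            rw [sig_comm_dn n σ hbr2 ha (by omega) (by omega),
              sig_comm_up n σ hbr2 ha (by omega) (by omega)]
        _ = braidDn σ (a + e + 1) e * (σ a * σ (a + 1) * σ a) *
              braidUp σ (a + 2) (e + 1) := by group
        _ = braidDn σ (a + e + 1) e * (σ (a + 1) * σ a * σ (a + 1)) *
              braidUp σ (a + 2) (e + 1) := by rw [hbr1 a ha (by omega)]
        _ = (braidDn σ (a + e + 1) e * σ (a + 1) * σ a) *
              (σ (a + 1) * braidUp σ (a + 2) (e + 1)) := by group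
        _ = braidDn σ (a + e + 1) (e + 2) * braidUp σ (a + 1) (e + 2) := by
            rw [show braidDn σ (a + e + 1) (e + 2)
                = braidDn σ (a + e + 1) e * σ (a + 1) * σ a by
              rw [show e + 2 = (e + 1) + 1 by omega, braidDn_succ,
                braidDn_succ, show a + e + 1 - e = a + 1 by omega,
                show a + e + 1 - (e + 1) = a by omega],
              show braidUp σ (a + 1) (e + 2)
                = σ (a + 1) * braidUp σ (a + 2) (e + 1) by
              rw [show e + 2 = (e + 1) + 1 by omega, braidUp_cons,
                show a + 1 + 1 = a + 2 by omega]]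

/-- the conjugating element g(m) = ∏_{c=1}^{m} σ_{2c} σ_{2c-1} ⋯ σ_{c+1} -/
def gProd (σ : ℕ → G) (m : ℕ) : G :=
  ((List.range m).map fun c => braidDn σ (2 * c + 2) (c + 1)).prod

/-- g(m) with all indices shifted down by one -/
def gDown (σ : ℕ → G) (m : ℕ) : G :=
  ((List.range m).map fun c => braidDn σ (2 * c + 1) (c + 1)).prod

lemma gProd_succ (σ : ℕ → G) (m : ℕ) :
    gProd σ (m + 1) = gProd σ m * braidDn σ (2 * m + 2) (m + 1) := by
  simp [gProd, List.range_succ]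

lemma gDown_succ (σ : ℕ → G) (m : ℕ) :
    gDown σ (m + 1) = gDown σ m * braidDn σ (2 * m + 1) (m + 1) := by
  simp [gDown, List.range_succ]

lemma gProd_comm_sig
    (hbr2 : ∀ i j, 1 ≤ i → i ≤ 2 * n → 1 ≤ j → j ≤ 2 * n → i + 2 ≤ j →
      σ i * σ j = σ j * σ i)
    {m j : ℕ} (h : 2 * m + 2 ≤ j) (hj : j ≤ 2 * n) :
    gProd σ m * σ j = σ j * gProd σ m := by
  induction m with
  | zero => simp [gProd]
  | succ m ih =>
      rw [gProd_succ, mul_assoc,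
        dn_comm_sig n σ hbr2 (by omega) hj (by omega),
        ← mul_assoc, ih (by omega), mul_assoc]

/-- key word identity E': τ_{2t+2} · g(t) = g↓(t+1) · σ_{t+2}⋯σ_{2t+2} -/
lemma lemmaE
    (hbr1 : ∀ i, 1 ≤ i → i + 1 ≤ 2 * n →
      σ i * σ (i + 1) * σ i = σ (i + 1) * σ i * σ (i + 1))
    (hbr2 : ∀ i j, 1 ≤ i → i ≤ 2 * n → 1 ≤ j → j ≤ 2 * n → i + 2 ≤ j →
      σ i * σ j = σ j * σ i)
    (t : ℕ) (ht : t + 1 ≤ n) :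
    braidUp σ 1 (2 * t + 2) * gProd σ t =
      gDown σ (t + 1) * braidUp σ (t + 2) (t + 1) := by
  induction t with
  | zero =>
      simp [gProd, gDown, braidUp, braidDn, List.range_succ]
  | succ t ih =>
      rw [show t + 1 + 2 = t + 3 by omega, show t + 1 + 1 = t + 2 by omega]
      have h1 : braidUp σ 1 (2 * (t + 1) + 2)
          = braidUp σ 1 (2 * t + 2) * σ (2 * t + 3) * σ (2 * t + 4) := by
        rw [show 2 * (t + 1) + 2 = (2 * t + 3) + 1 by omega, braidUp_succ,
          show 2 * t + 3 = (2 * t + 2) + 1 by omega, braidUp_succ,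
          show 1 + (2 * t + 2) = 2 * t + 3 by omega,
          show 1 + (2 * t + 2 + 1) = 2 * t + 4 by omega,
          show (2 * t + 2) + 1 = 2 * t + 3 by omega]
      have c1 : σ (2 * t + 3) * gProd σ t = gProd σ t * σ (2 * t + 3) :=
        (gProd_comm_sig n σ hbr2 (by omega) (by omega)).symm
      have c2 : σ (2 * t + 4) * gProd σ t = gProd σ t * σ (2 * t + 4) :=
        (gProd_comm_sig n σ hbr2 (by omega) (by omega)).symm
      have e1 := braidUp_succ σ (t + 2) (t + 1)
      rw [show t + 1 + 1 = t + 2 by omega,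
        show t + 2 + (t + 1) = 2 * t + 3 by omega] at e1
      have e2 := braidUp_succ σ (t + 2) (t + 2)
      rw [show t + 2 + 1 = t + 3 by omega,
        show t + 2 + (t + 2) = 2 * t + 4 by omega] at e2
      have h2 : braidUp σ (t + 2) (t + 1) * σ (2 * t + 3) * σ (2 * t + 4)
          = braidUp σ (t + 2) (t + 3) := by rw [e2, e1]
      have hL := lemmaL n σ hbr1 hbr2 (t + 1) (t + 2) (by omega) (by omega)
      rw [show t + 2 + (t + 1) - 1 = 2 * t + 2 by omega,
        show t + 2 + (t + 1) = 2 * t + 3 by omega,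
        show t + 1 + 2 = t + 3 by omega, show t + 1 + 1 = t + 2 by omega,
        show t + 2 + 1 = t + 3 by omega] at hL
      have e3 := gDown_succ σ (t + 1)
      rw [show 2 * (t + 1) + 1 = 2 * t + 3 by omega,
        show t + 1 + 1 = t + 2 by omega] at e3
      calc braidUp σ 1 (2 * (t + 1) + 2) * gProd σ (t + 1)
          = braidUp σ 1 (2 * t + 2) * (σ (2 * t + 3) * gProd σ t) *
              σ (2 * t + 4) * braidDn σ (2 * t + 2) (t + 1) := by
            rw [h1, gProd_succ, ← mul_assoc]
            rw [show braidUp σ 1 (2 * t + 2) * σ (2 * t + 3) * σ (2 * t + 4) *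
                gProd σ t = braidUp σ 1 (2 * t + 2) * σ (2 * t + 3) *
                (σ (2 * t + 4) * gProd σ t) by group, c2]
            group
        _ = braidUp σ 1 (2 * t + 2) * (gProd σ t * σ (2 * t + 3)) *
              σ (2 * t + 4) * braidDn σ (2 * t + 2) (t + 1) := by rw [c1]
        _ = (braidUp σ 1 (2 * t + 2) * gProd σ t) * (σ (2 * t + 3) *
              σ (2 * t + 4) * braidDn σ (2 * t + 2) (t + 1)) := by group
        _ = (gDown σ (t + 1) * braidUp σ (t + 2) (t + 1)) * (σ (2 * t + 3) *
              σ (2 * t + 4) * braidDn σ (2 * t + 2) (t + 1)) := by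
            rw [ih (by omega)]
        _ = gDown σ (t + 1) * ((braidUp σ (t + 2) (t + 1) * σ (2 * t + 3) *
              σ (2 * t + 4)) * braidDn σ (2 * t + 2) (t + 1)) := by group
        _ = gDown σ (t + 1) * (braidDn σ (2 * t + 3) (t + 2) *
              braidUp σ (t + 3) (t + 2)) := by rw [h2, hL]
        _ = gDown σ (t + 2) * braidUp σ (t + 3) (t + 2) := by
            rw [e3]; group

/-- single-letter shift: τ σ_i = σ_{i+1} τ -/
lemma tau_shift
    (hbr1 : ∀ i, 1 ≤ i → i + 1 ≤ 2 * n →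
      σ i * σ (i + 1) * σ i = σ (i + 1) * σ i * σ (i + 1))
    (hbr2 : ∀ i j, 1 ≤ i → i ≤ 2 * n → 1 ≤ j → j ≤ 2 * n → i + 2 ≤ j →
      σ i * σ j = σ j * σ i)
    {i : ℕ} (hi : 1 ≤ i) (hi2 : i + 1 ≤ 2 * n) :
    braidUp σ 1 (2 * n) * σ i = σ (i + 1) * braidUp σ 1 (2 * n) := by
  obtain ⟨k, hk⟩ : ∃ k, 2 * n = (i + 1) + k := ⟨2 * n - (i + 1), by omega⟩
  obtain ⟨m, hm⟩ : ∃ m, i = m + 1 := ⟨i - 1, by omega⟩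
  rw [hk, braidUp_append]
  rw [show braidUp σ 1 (i + 1) * braidUp σ (1 + (i + 1)) k * σ i
      = braidUp σ 1 (i + 1) * (braidUp σ (1 + (i + 1)) k * σ i) by group]
  rw [show braidUp σ (1 + (i + 1)) k * σ i
      = σ i * braidUp σ (1 + (i + 1)) k from
    (sig_comm_up n σ hbr2 hi (by omega) (by omega)).symm]
  have h3 : braidUp σ 1 (i + 1) = braidUp σ 1 m * σ i * σ (i + 1) := by
    rw [hm, braidUp_succ, braidUp_succ, show 1 + m = m + 1 by omega,
      show 1 + (m + 1) = m + 1 + 1 by omega]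
  rw [show braidUp σ 1 (i + 1) * (σ i * braidUp σ (1 + (i + 1)) k)
      = (braidUp σ 1 (i + 1) * σ i) * braidUp σ (1 + (i + 1)) k by group,
    h3]
  rw [show braidUp σ 1 m * σ i * σ (i + 1) * σ i
      = braidUp σ 1 m * (σ i * σ (i + 1) * σ i) by group,
    hbr1 i hi hi2]
  rw [show braidUp σ 1 m * (σ (i + 1) * σ i * σ (i + 1))
      = (braidUp σ 1 m * σ (i + 1)) * (σ i * σ (i + 1)) by group]
  rw [up_comm_sig n σ hbr2 (by omega) (by omega) (by omega)]
  rw [show σ (i + 1) * braidUp σ 1 m * (σ i * σ (i + 1)) *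
        braidUp σ (1 + (i + 1)) k
      = σ (i + 1) * ((braidUp σ 1 m * σ i * σ (i + 1)) *
        braidUp σ (1 + (i + 1)) k) by group, ← h3]

/-- block shift: (σ_b ⋯ σ_{b-k+1}) τ = τ (σ_{b-1} ⋯ σ_{b-k}) -/
lemma dn_shift
    (hbr1 : ∀ i, 1 ≤ i → i + 1 ≤ 2 * n →
      σ i * σ (i + 1) * σ i = σ (i + 1) * σ i * σ (i + 1))
    (hbr2 : ∀ i j, 1 ≤ i → i ≤ 2 * n → 1 ≤ j → j ≤ 2 * n → i + 2 ≤ j →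
      σ i * σ j = σ j * σ i)
    {b k : ℕ} (hb : b ≤ 2 * n) (hkb : k + 1 ≤ b) :
    braidDn σ b k * braidUp σ 1 (2 * n) =
      braidUp σ 1 (2 * n) * braidDn σ (b - 1) k := by
  induction k with
  | zero => simp [braidDn_zero]
  | succ k ih =>
      have hs : braidUp σ 1 (2 * n) * σ (b - k - 1)
          = σ (b - k) * braidUp σ 1 (2 * n) := by
        have := tau_shift n σ hbr1 hbr2 (i := b - k - 1) (by omega) (by omega)
        rwa [show b - k - 1 + 1 = b - k by omega] at this
      rw [braidDn_succ, mul_assoc, show σ (b - k) * braidUp σ 1 (2 * n)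
          = braidUp σ 1 (2 * n) * σ (b - k - 1) from hs.symm,
        ← mul_assoc, ih (by omega), mul_assoc,
        show b - k - 1 = (b - 1) - k by omega, ← braidDn_succ]

/-- whole conjugator shift: g(m) τ = τ g↓(m) -/
lemma gProd_shift
    (hbr1 : ∀ i, 1 ≤ i → i + 1 ≤ 2 * n →
      σ i * σ (i + 1) * σ i = σ (i + 1) * σ i * σ (i + 1))
    (hbr2 : ∀ i j, 1 ≤ i → i ≤ 2 * n → 1 ≤ j → j ≤ 2 * n → i + 2 ≤ j →
      σ i * σ j = σ j * σ i)
    {m : ℕ} (hm : m ≤ n) :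
    gProd σ m * braidUp σ 1 (2 * n) =
      braidUp σ 1 (2 * n) * gDown σ m := by
  induction m with
  | zero => simp [gProd, gDown]
  | succ m ih =>
      have hd := dn_shift n σ hbr1 hbr2 (b := 2 * m + 2) (k := m + 1)
        (by omega) (by omega)
      rw [show 2 * m + 2 - 1 = 2 * m + 1 by omega] at hd
      rw [gProd_succ, mul_assoc, hd, ← mul_assoc, ih (by omega), mul_assoc,
        ← gDown_succ]

end BraidConjMain

/-- Abstract form of Lemma 3.1: for z central and σ₁,…,σ_{2n} satisfying the
braid relations of B_{2n+1}, with τ = σ₁⋯σ_{2n}, the element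
zτ(σ_{n+1}⋯σ_{2n})(σ_{2n}⋯σ_{n+1}) is conjugate to zτ². -/
theorem lemma_conjugate {G : Type*} [Group G] (n : ℕ) (hn : 1 ≤ n)
    (z : G) (hz : ∀ g : G, z * g = g * z) (σ : ℕ → G)
    (hbr1 : ∀ i, 1 ≤ i → i + 1 ≤ 2 * n →
      σ i * σ (i + 1) * σ i = σ (i + 1) * σ i * σ (i + 1))
    (hbr2 : ∀ i j, 1 ≤ i → i ≤ 2 * n → 1 ≤ j → j ≤ 2 * n → i + 2 ≤ j →
      σ i * σ j = σ j * σ i)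
    (τ : G) (hτ : τ = ((List.range (2 * n)).map (fun i => σ (i + 1))).prod) :
    IsConj (z * τ ^ 2)
      (z * τ * ((List.range n).map (fun j => σ (n + 1 + j))).prod *
        ((List.range n).map (fun j => σ (2 * n - j))).prod) := by
  have hτ' : τ = braidUp σ 1 (2 * n) := by
    rw [hτ]; unfold braidUp; congr 1
    apply List.map_congr_left
    intro i _
    congr 1
    omega
  have hI : ((List.range n).map (fun j => σ (n + 1 + j))).prod
      = braidUp σ (n + 1) n := rfl
  have hD : ((List.range n).map (fun j => σ (2 * n - j))).prod
      = braidDn σ (2 * n) n := rfl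
  -- the main identity E: τ · g(n) = g↓(n) · I · D
  obtain ⟨t, ht⟩ : ∃ t, n = t + 1 := ⟨n - 1, by omega⟩
  have hE' := lemmaE n σ hbr1 hbr2 t (by omega)
  -- multiply by the last column:  g(n) = g(t) · dn (2t+2) (t+1)
  have hE : braidUp σ 1 (2 * n) * gProd σ n =
      gDown σ n * braidUp σ (n + 1) n * braidDn σ (2 * n) n := by
    have h1 : gProd σ n = gProd σ t * braidDn σ (2 * t + 2) (t + 1) := by
      rw [ht, gProd_succ]
    have h2 : braidDn σ (2 * t + 2) (t + 1) = braidDn σ (2 * n) n := by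
      rw [ht, show 2 * (t + 1) = 2 * t + 2 from by omega]
    calc braidUp σ 1 (2 * n) * gProd σ n
        = (braidUp σ 1 (2 * t + 2) * gProd σ t) * braidDn σ (2 * n) n := by
          rw [h1, h2, ← mul_assoc, show 2 * n = 2 * t + 2 by omega]
      _ = gDown σ (t + 1) * braidUp σ (t + 2) (t + 1) *
            braidDn σ (2 * n) n := by rw [hE']
      _ = gDown σ n * braidUp σ (n + 1) n * braidDn σ (2 * n) n := by
          rw [ht, show t + 1 + 1 = t + 2 by omega]
  -- shift: g(n) τ = τ g↓(n)
  have hS := gProd_shift n σ hbr1 hbr2 (m := n) le_rfl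
  -- assemble everything
  rw [isConj_iff]
  refine ⟨(gProd σ n)⁻¹, ?_⟩
  rw [hI, hD, hτ', inv_inv]
  have key : z * braidUp σ 1 (2 * n) ^ 2 * gProd σ n =
      gProd σ n * (z * braidUp σ 1 (2 * n) * braidUp σ (n + 1) n *
        braidDn σ (2 * n) n) := by
    calc z * braidUp σ 1 (2 * n) ^ 2 * gProd σ n
        = z * (braidUp σ 1 (2 * n) *
            (braidUp σ 1 (2 * n) * gProd σ n)) := by rw [pow_two]; group
      _ = z * (braidUp σ 1 (2 * n) * (gDown σ n * braidUp σ (n + 1) n *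
            braidDn σ (2 * n) n)) := by rw [hE]
      _ = z * ((braidUp σ 1 (2 * n) * gDown σ n) * braidUp σ (n + 1) n *
            braidDn σ (2 * n) n) := by group
      _ = z * ((gProd σ n * braidUp σ 1 (2 * n)) * braidUp σ (n + 1) n *
            braidDn σ (2 * n) n) := by rw [hS]
      _ = gProd σ n * (z * braidUp σ 1 (2 * n) * braidUp σ (n + 1) n *
            braidDn σ (2 * n) n) := by
          rw [show z * (gProd σ n * braidUp σ 1 (2 * n) *
              braidUp σ (n + 1) n * braidDn σ (2 * n) n)
            = (z * gProd σ n) * (braidUp σ 1 (2 * n) *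
              braidUp σ (n + 1) n * braidDn σ (2 * n) n) by group,
            hz (gProd σ n)]
          group
  calc (gProd σ n)⁻¹ * (z * braidUp σ 1 (2 * n) ^ 2) * gProd σ n
      = (gProd σ n)⁻¹ * (z * braidUp σ 1 (2 * n) ^ 2 * gProd σ n) := by group
    _ = (gProd σ n)⁻¹ * (gProd σ n * (z * braidUp σ 1 (2 * n) *
          braidUp σ (n + 1) n * braidDn σ (2 * n) n)) := by rw [key]
    _ = z * braidUp σ 1 (2 * n) * braidUp σ (n + 1) n *
          braidDn σ (2 * n) n := by group
end

section
/- Let G be a group, z central in G, σ₁,…,σ_{2n} satisfying the braid relations of B_{2n+1}, τ = σ₁⋯σ_{2n}, and for 1 ≤ k ≤ n define c_k = σ_{k+1}σ_{k+3}⋯σ_{2n−k+1} (indices increasing by 2) and β_k inductively by β₀ = zτ² and β_k = c_k⁻¹β_{k−1}c_k. Then for all 1 ≤ k ≤ n, β_k = zτ(σ_k⁻¹σ_{k−1}⁻¹⋯σ₁⁻¹)τ(σ_{2n}σ_{2n−1}⋯σ_{2n−k+1}). -/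
private def Cpr {G : Type*} [Group G] (σ : ℕ → G) (a m : ℕ) : G :=
  ((List.range m).map (fun j => σ (a + 2*j))).prod

private lemma Cpr_succ_right {G : Type*} [Group G] (σ : ℕ → G) (a m : ℕ) :
    Cpr σ a (m+1) = Cpr σ a m * σ (a + 2*m) := by
  simp [Cpr, List.range_succ]

private lemma Cpr_succ_left {G : Type*} [Group G] (σ : ℕ → G) (a m : ℕ) :
    Cpr σ a (m+1) = σ a * Cpr σ (a+2) m := by
  induction m with
  | zero => simp [Cpr, List.range_succ]
  | succ m ih =>
      rw [Cpr_succ_right, ih, Cpr_succ_right, mul_assoc]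
      congr 3
      omega

private lemma Cpr_comm {G : Type*} [Group G] (σ : ℕ → G) (a m : ℕ) (x : G)
    (h : ∀ j < m, Commute x (σ (a + 2*j))) : Commute x (Cpr σ a m) := by
  apply Commute.list_prod_right
  intro y hy
  simp only [List.mem_map, List.mem_range] at hy
  obtain ⟨j, hj, rfl⟩ := hy
  exact h j hj

private def Qpr {G : Type*} [Group G] (σ : ℕ → G) (a b : ℕ) : G :=
  ((List.range b).map (fun j => σ (a + j + 1))).prod

private lemma Qpr_add {G : Type*} [Group G] (σ : ℕ → G) (a b c : ℕ) :
    Qpr σ a (b + c) = Qpr σ a b * Qpr σ (a + b) c := by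
  rw [Qpr, List.range_add, List.map_append, List.prod_append, List.map_map]
  congr 1
  rw [Qpr]
  congr 1
  apply List.map_congr_left
  intro j _
  simp only [Function.comp]
  congr 1
  omega

private lemma Qpr_one {G : Type*} [Group G] (σ : ℕ → G) (a : ℕ) :
    Qpr σ a 1 = σ (a + 1) := by
  simp [Qpr, List.range_succ]

private lemma Qpr_comm {G : Type*} [Group G] (σ : ℕ → G) (a b : ℕ) (x : G)
    (h : ∀ j < b, Commute x (σ (a + j + 1))) : Commute x (Qpr σ a b) := by
  apply Commute.list_prod_right
  intro y hy
  simp only [List.mem_map, List.mem_range] at hy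
  obtain ⟨j, hj, rfl⟩ := hy
  exact h j hj

private lemma tau_shift_s5 {G : Type*} [Group G] (n : ℕ) (σ : ℕ → G)
    (hbr1 : ∀ i, 1 ≤ i → i + 1 ≤ 2 * n →
      σ i * σ (i + 1) * σ i = σ (i + 1) * σ i * σ (i + 1))
    (hbr2 : ∀ i j, 1 ≤ i → i ≤ 2 * n → 1 ≤ j → j ≤ 2 * n → i + 2 ≤ j →
      σ i * σ j = σ j * σ i)
    (τ : G) (hτ : τ = ((List.range (2 * n)).map (fun i => σ (i + 1))).prod)
    (i : ℕ) (hi1 : 1 ≤ i) (hi2 : i + 1 ≤ 2 * n) : τ * σ i = σ (i + 1) * τ := by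
  have hτ' : τ = Qpr σ 0 (2 * n) := by
    rw [hτ, Qpr]
    congr 1
    apply List.map_congr_left
    intro j _
    congr 1
    omega
  obtain ⟨i', rfl⟩ : ∃ i', i = i' + 1 := ⟨i - 1, by omega⟩
  set r := 2 * n - (i' + 1) - 1 with hr
  have hsplit : 2 * n = i' + (1 + (1 + r)) := by omega
  have hd : τ = Qpr σ 0 i' * (σ (i'+1) * (σ (i'+2) * Qpr σ (i'+2) r)) := by
    rw [hτ', hsplit, Qpr_add, Qpr_add, Qpr_add, Qpr_one, Qpr_one]
    have e1 : 0 + i' = i' := by omega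
    have e2 : i' + 1 + 1 = i' + 2 := by omega
    rw [e1, e2]
  have hcQ : Commute (σ (i'+1)) (Qpr σ (i'+2) r) := by
    apply Qpr_comm
    intro j hj
    exact hbr2 (i'+1) (i'+2+j+1) (by omega) (by omega) (by omega) (by omega) (by omega)
  have hcP : Commute (σ (i'+2)) (Qpr σ 0 i') := by
    apply Qpr_comm
    intro j hj
    exact (hbr2 (0+j+1) (i'+2) (by omega) (by omega) (by omega) (by omega) (by omega)).symm
  calc τ * σ (i'+1)
      = Qpr σ 0 i' * (σ (i'+1) * (σ (i'+2) * (Qpr σ (i'+2) r * σ (i'+1)))) := by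
        rw [hd]; group
    _ = Qpr σ 0 i' * (σ (i'+1) * σ (i'+2) * σ (i'+1) * Qpr σ (i'+2) r) := by
        rw [← hcQ.eq]; group
    _ = Qpr σ 0 i' * (σ (i'+2) * σ (i'+1) * σ (i'+2) * Qpr σ (i'+2) r) := by
        rw [hbr1 (i'+1) (by omega) (by omega)]
    _ = σ (i'+1+1) * τ := by
        have e2 : i' + 1 + 1 = i' + 2 := by omega
        rw [hd, e2]
        rw [show ∀ x : G, σ (i'+2) * (Qpr σ 0 i' * x) = Qpr σ 0 i' * (σ (i'+2) * x)
          from fun x => by rw [← mul_assoc, hcP.eq, mul_assoc]]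
        group

private lemma Cpr_shift {G : Type*} [Group G] (n : ℕ) (σ : ℕ → G)
    (hbr1 : ∀ i, 1 ≤ i → i + 1 ≤ 2 * n →
      σ i * σ (i + 1) * σ i = σ (i + 1) * σ i * σ (i + 1))
    (hbr2 : ∀ i j, 1 ≤ i → i ≤ 2 * n → 1 ≤ j → j ≤ 2 * n → i + 2 ≤ j →
      σ i * σ j = σ j * σ i)
    (τ : G) (hτ : τ = ((List.range (2 * n)).map (fun i => σ (i + 1))).prod)
    (a m : ℕ) (ha : 1 ≤ a) (hm : ∀ j < m, a + 1 + 2 * j ≤ 2 * n) :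
    Cpr σ (a+1) m * τ = τ * Cpr σ a m := by
  induction m with
  | zero => simp [Cpr]
  | succ m ih =>
      have ih' := ih (fun j hj => hm j (by omega))
      have h1 : σ (a + 1 + 2 * m) * τ = τ * σ (a + 2 * m) := by
        have h := tau_shift_s5 n σ hbr1 hbr2 τ hτ (a + 2 * m) (by omega)
          (by have := hm m (by omega); omega)
        rw [show a + 1 + 2 * m = a + 2 * m + 1 by omega]
        exact h.symm
      calc Cpr σ (a+1) (m+1) * τ
          = Cpr σ (a+1) m * (σ (a + 1 + 2 * m) * τ) := by
            rw [Cpr_succ_right]; group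
        _ = Cpr σ (a+1) m * (τ * σ (a + 2 * m)) := by rw [h1]
        _ = (Cpr σ (a+1) m * τ) * σ (a + 2 * m) := by group
        _ = (τ * Cpr σ a m) * σ (a + 2 * m) := by rw [ih']
        _ = τ * Cpr σ a (m+1) := by rw [Cpr_succ_right]; group


/-- The inductive computation in the proof of Lemma 3.1: with z central,
σ₁,…,σ_{2n} satisfying the braid relations, τ = σ₁⋯σ_{2n},
c_k = σ_{k+1}σ_{k+3}⋯σ_{2n−k+1}, β₀ = zτ² and β_k = c_k⁻¹ β_{k−1} c_k,
one has β_k = zτ(σ_k⁻¹⋯σ₁⁻¹)τ(σ_{2n}⋯σ_{2n−k+1}) for 1 ≤ k ≤ n. -/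
theorem beta_formula {G : Type*} [Group G] (n : ℕ) (hn : 1 ≤ n)
    (z : G) (hz : ∀ g : G, z * g = g * z) (σ : ℕ → G)
    (hbr1 : ∀ i, 1 ≤ i → i + 1 ≤ 2 * n →
      σ i * σ (i + 1) * σ i = σ (i + 1) * σ i * σ (i + 1))
    (hbr2 : ∀ i j, 1 ≤ i → i ≤ 2 * n → 1 ≤ j → j ≤ 2 * n → i + 2 ≤ j →
      σ i * σ j = σ j * σ i)
    (τ : G) (hτ : τ = ((List.range (2 * n)).map (fun i => σ (i + 1))).prod)
    (c : ℕ → G)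
    (hc : ∀ k, 1 ≤ k → k ≤ n →
      c k = ((List.range (n - k + 1)).map (fun j => σ (k + 1 + 2 * j))).prod)
    (β : ℕ → G) (hβ0 : β 0 = z * τ ^ 2)
    (hβ : ∀ k, 1 ≤ k → k ≤ n → β k = (c k)⁻¹ * β (k - 1) * c k) :
    ∀ k, 1 ≤ k → k ≤ n →
      β k = z * τ * ((List.range k).map (fun j => (σ (k - j))⁻¹)).prod * τ *
        ((List.range k).map (fun j => σ (2 * n - j))).prod := by
  have key : ∀ k, k ≤ n →
      β k = z * τ * ((List.range k).map (fun j => (σ (k - j))⁻¹)).prod * τ *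
        ((List.range k).map (fun j => σ (2 * n - j))).prod := by
    intro k
    induction k with
    | zero => intro _; rw [hβ0, sq]; simp [← mul_assoc]
    | succ k ih =>
        intro hk
        have ihk := ih (by omega)
        set Ak : G := ((List.range k).map (fun j => (σ (k - j))⁻¹)).prod with hAkdef
        set Bk : G := ((List.range k).map (fun j => σ (2 * n - j))).prod with hBkdef
        set Ak1 : G := ((List.range (k+1)).map (fun j => (σ (k + 1 - j))⁻¹)).prod with hAk1def
        set Bk1 : G := ((List.range (k+1)).map (fun j => σ (2 * n - j))).prod with hBk1def
        have hA : Ak1 = (σ (k+1))⁻¹ * Ak := by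
          rw [hAk1def, hAkdef, List.range_succ_eq_map, List.map_cons, List.prod_cons,
            List.map_map]
          congr 2
          apply List.map_congr_left
          intro j _
          simp only [Function.comp_apply, Nat.succ_sub_succ]
        have hB : Bk1 = Bk * σ (2 * n - k) := by
          rw [hBk1def, hBkdef, List.range_succ, List.map_append, List.prod_append]
          simp
        set cc : G := c (k+1) with hccdef
        set d : G := Cpr σ (k+1) (n-k) with hddef
        set e : G := Cpr σ (k+3) (n-k-1) with hedef
        set f : G := Cpr σ (k+2) (n-k-1) with hfdef
        have hnk : n - k = (n - k - 1) + 1 := by omega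
        have hcc : cc = Cpr σ (k+2) (n-k) := by
          rw [hccdef, hc (k+1) (by omega) hk, Cpr, show n - (k+1) + 1 = n - k by omega]
        have F1 : cc * τ = τ * d := by
          rw [hcc, hddef]
          exact Cpr_shift n σ hbr1 hbr2 τ hτ (k+1) (n-k) (by omega)
            (fun j hj => by omega)
        have F2 : d = σ (k+1) * e := by
          rw [hddef, hedef]
          have h := Cpr_succ_left σ (k+1) (n-k-1)
          rw [← hnk] at h
          exact h
        have F3 : e * τ = τ * f := by
          rw [hedef, hfdef]
          exact Cpr_shift n σ hbr1 hbr2 τ hτ (k+2) (n-k-1) (by omega)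
            (fun j hj => by omega)
        have F4 : cc = f * σ (2 * n - k) := by
          rw [hcc, hfdef]
          have h := Cpr_succ_right σ (k+2) (n-k-1)
          rw [← hnk, show k + 2 + 2 * (n - k - 1) = 2 * n - k from by omega] at h
          exact h
        have F5 : Commute (σ (k+1)) e := by
          rw [hedef]
          apply Cpr_comm
          intro j hj
          exact hbr2 (k+1) (k+3+2*j) (by omega) (by omega) (by omega) (by omega) (by omega)
        have F6 : Commute Ak e := by
          rw [hAkdef]
          apply Commute.list_prod_left
          intro x hx
          simp only [List.mem_map, List.mem_range] at hx
          obtain ⟨j, hj, rfl⟩ := hx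
          apply Commute.inv_left
          rw [hedef]
          apply Cpr_comm
          intro j' hj'
          exact hbr2 (k-j) (k+3+2*j') (by omega) (by omega) (by omega) (by omega) (by omega)
        have Ecom : e⁻¹ * Ak1 = Ak1 * e⁻¹ := by
          have h : Commute Ak1 e⁻¹ := by
            rw [hA]; exact (Commute.mul_left F5.inv_left F6).inv_right
          exact h.eq.symm
        have F7com : Bk * f = f * Bk := by
          rw [hBkdef]
          apply Commute.list_prod_left
          intro x hx
          simp only [List.mem_map, List.mem_range] at hx
          obtain ⟨j, hj, rfl⟩ := hx
          rw [hfdef]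
          apply Cpr_comm
          intro j' hj'
          exact (hbr2 (k+2+2*j') (2*n-j) (by omega) (by omega) (by omega) (by omega)
            (by omega)).symm
        have E1 : cc⁻¹ * τ = τ * d⁻¹ := by
          calc cc⁻¹ * τ = cc⁻¹ * (τ * d) * d⁻¹ := by group
            _ = cc⁻¹ * (cc * τ) * d⁻¹ := by rw [F1]
            _ = τ * d⁻¹ := by group
        have E2 : e⁻¹ * τ = τ * f⁻¹ := by
          calc e⁻¹ * τ = e⁻¹ * (τ * f) * f⁻¹ := by group
            _ = e⁻¹ * (e * τ) * f⁻¹ := by rw [F3]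
            _ = τ * f⁻¹ := by group
        have E3 : f⁻¹ * (Bk * cc) = Bk * σ (2 * n - k) := by
          calc f⁻¹ * (Bk * cc) = f⁻¹ * (Bk * (f * σ (2 * n - k))) := by rw [← F4]
            _ = f⁻¹ * ((Bk * f) * σ (2 * n - k)) := by group
            _ = f⁻¹ * ((f * Bk) * σ (2 * n - k)) := by rw [F7com]
            _ = Bk * σ (2 * n - k) := by group
        have Ed : d⁻¹ = e⁻¹ * (σ (k+1))⁻¹ := by rw [F2]; group
        have main : cc⁻¹ * (τ * Ak * τ * Bk) * cc = τ * Ak1 * τ * Bk1 := by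
          calc cc⁻¹ * (τ * Ak * τ * Bk) * cc
              = (cc⁻¹ * τ) * (Ak * (τ * (Bk * cc))) := by group
            _ = (τ * d⁻¹) * (Ak * (τ * (Bk * cc))) := by rw [E1]
            _ = τ * ((d⁻¹ * Ak) * (τ * (Bk * cc))) := by group
            _ = τ * (((e⁻¹ * (σ (k+1))⁻¹) * Ak) * (τ * (Bk * cc))) := by rw [Ed]
            _ = τ * ((e⁻¹ * ((σ (k+1))⁻¹ * Ak)) * (τ * (Bk * cc))) := by group
            _ = τ * ((e⁻¹ * Ak1) * (τ * (Bk * cc))) := by rw [← hA]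
            _ = τ * ((Ak1 * e⁻¹) * (τ * (Bk * cc))) := by rw [Ecom]
            _ = τ * (Ak1 * ((e⁻¹ * τ) * (Bk * cc))) := by group
            _ = τ * (Ak1 * ((τ * f⁻¹) * (Bk * cc))) := by rw [E2]
            _ = τ * (Ak1 * (τ * (f⁻¹ * (Bk * cc)))) := by group
            _ = τ * (Ak1 * (τ * (Bk * σ (2 * n - k)))) := by rw [E3]
            _ = τ * (Ak1 * (τ * Bk1)) := by rw [← hB]
            _ = τ * Ak1 * τ * Bk1 := by group
        calc β (k+1) = cc⁻¹ * β k * cc := by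
              rw [hβ (k+1) (by omega) hk]; simp [hccdef]
          _ = cc⁻¹ * (z * (τ * Ak * τ * Bk)) * cc := by rw [ihk]; group
          _ = cc⁻¹ * ((τ * Ak * τ * Bk) * z) * cc := by rw [hz]
          _ = (cc⁻¹ * (τ * Ak * τ * Bk)) * (z * cc) := by group
          _ = (cc⁻¹ * (τ * Ak * τ * Bk)) * (cc * z) := by rw [hz]
          _ = (cc⁻¹ * (τ * Ak * τ * Bk) * cc) * z := by group
          _ = (τ * Ak1 * τ * Bk1) * z := by rw [main]
          _ = z * (τ * Ak1 * τ * Bk1) := by rw [← hz]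
          _ = z * τ * Ak1 * τ * Bk1 := by group
  intro k _ hk2
  exact key k hk2
end

section
/- For any positive integer n, the sequence ([1, 3n+4], [n+2, 3n+3], [n+1, 3n+2], …, [2, 2n+3], [4n+5, 2n+2], [4n+4, 2n+1], …, [3n+6, n+3], 3n+5) described in the paper is a permutation of {1, 2, …, 4n+5}; i.e., the 4n+5 listed entries are pairwise distinct and cover {1,…,4n+5}. -/
/-- The petal permutation sequence of T_{2n+1,2n+3} from the paper:
(1, 3n+4, n+2, 3n+3, n+1, 3n+2, …, 2, 2n+3, 4n+5, 2n+2, 4n+4, 2n+1, …,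
3n+6, n+3, 3n+5). -/
def petalSeq (n : ℕ) : List ℕ :=
  [1, 3 * n + 4] ++
    ((List.range (n + 1)).flatMap (fun j => [n + 2 - j, 3 * n + 3 - j])) ++
    ((List.range n).flatMap (fun j => [4 * n + 5 - j, 2 * n + 2 - j])) ++
    [3 * n + 5]

lemma memB (n m : ℕ) :
    m ∈ (List.range (n + 1)).flatMap (fun j => [n + 2 - j, 3 * n + 3 - j]) ↔
      (2 ≤ m ∧ m ≤ n + 2) ∨ (2 * n + 3 ≤ m ∧ m ≤ 3 * n + 3) := by
  simp only [List.mem_flatMap, List.mem_range, List.mem_cons, List.mem_singleton,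
    List.not_mem_nil, or_false]
  constructor
  · rintro ⟨j, hj, h | h⟩ <;> omega
  · rintro (⟨h1, h2⟩ | ⟨h1, h2⟩)
    · exact ⟨n + 2 - m, by omega, Or.inl (by omega)⟩
    · exact ⟨3 * n + 3 - m, by omega, Or.inr (by omega)⟩

lemma memC (n m : ℕ) :
    m ∈ (List.range n).flatMap (fun j => [4 * n + 5 - j, 2 * n + 2 - j]) ↔
      (3 * n + 6 ≤ m ∧ m ≤ 4 * n + 5) ∨ (n + 3 ≤ m ∧ m ≤ 2 * n + 2) := by
  simp only [List.mem_flatMap, List.mem_range, List.mem_cons, List.mem_singleton,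
    List.not_mem_nil, or_false]
  constructor
  · rintro ⟨j, hj, h | h⟩ <;> omega
  · rintro (⟨h1, h2⟩ | ⟨h1, h2⟩)
    · exact ⟨4 * n + 5 - m, by omega, Or.inl (by omega)⟩
    · exact ⟨2 * n + 2 - m, by omega, Or.inr (by omega)⟩

lemma nodupB (n : ℕ) :
    ((List.range (n + 1)).flatMap (fun j => [n + 2 - j, 3 * n + 3 - j])).Nodup := by
  rw [List.nodup_flatMap]
  constructor
  · intro j hj
    simp only [List.mem_range] at hj
    refine List.nodup_cons.2 ⟨?_, List.nodup_singleton _⟩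
    simp only [List.mem_singleton]
    omega
  · refine List.Pairwise.imp_of_mem ?_ (List.pairwise_lt_range (n := n + 1))
    intro i j hi hj hij
    simp only [List.mem_range] at hi hj
    intro a ha hb
    simp only [Function.onFun, List.mem_cons, List.mem_singleton, List.not_mem_nil,
      or_false] at ha hb
    omega

lemma nodupC (n : ℕ) :
    ((List.range n).flatMap (fun j => [4 * n + 5 - j, 2 * n + 2 - j])).Nodup := by
  rw [List.nodup_flatMap]
  constructor
  · intro j hj
    simp only [List.mem_range] at hj
    refine List.nodup_cons.2 ⟨?_, List.nodup_singleton _⟩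
    simp only [List.mem_singleton]
    omega
  · refine List.Pairwise.imp_of_mem ?_ (List.pairwise_lt_range (n := n))
    intro i j hi hj hij
    simp only [List.mem_range] at hi hj
    intro a ha hb
    simp only [Function.onFun, List.mem_cons, List.mem_singleton, List.not_mem_nil,
      or_false] at ha hb
    omega

/-- For any positive integer n, the petal permutation sequence is a genuine
permutation of {1, 2, …, 4n+5}: its entries are pairwise distinct and it
covers {1,…,4n+5}. -/
theorem petalSeq_perm (n : ℕ) (hn : 1 ≤ n) :
    (petalSeq n).Nodup ∧ ∀ m, m ∈ petalSeq n ↔ 1 ≤ m ∧ m ≤ 4 * n + 5 := by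
  constructor
  · unfold petalSeq
    rw [List.nodup_append, List.nodup_append, List.nodup_append]
    refine ⟨⟨⟨by simp, nodupB n, ?_⟩, nodupC n, ?_⟩, by simp, ?_⟩
    · intro a ha b hb
      rw [memB] at hb
      simp only [List.mem_cons, List.mem_singleton, List.not_mem_nil, or_false] at ha
      omega
    · intro a ha b hb
      rw [memC] at hb
      simp only [List.mem_append, List.mem_cons, List.mem_singleton, List.not_mem_nil,
        or_false, memB] at ha
      omega
    · intro a ha b hb
      simp only [List.mem_cons, List.mem_singleton, List.not_mem_nil, or_false] at hb
      simp only [List.mem_append, List.mem_cons, List.mem_singleton, List.not_mem_nil,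
        or_false, memB, memC] at ha
      omega
  · intro m
    simp only [petalSeq, List.mem_append, List.mem_cons, List.mem_singleton,
      List.not_mem_nil, or_false, memB, memC]
    omega
end

section
/- For any positive integer n, the petal permutation of T_{2n+1,2n+3} given in the paper, viewed as a cyclic sequence of the odd length 4n+5, alternates in parity of position level: consecutive entries in the sequence always differ by more than 1 in absolute value (no two adjacent petals have adjacent levels). -/
namespace PetalAux

lemma pb_length (f g : ℕ → ℕ) (m : ℕ) :
    ((List.range m).flatMap (fun j => [f j, g j])).length = 2 * m := by
  induction m with
  | zero => simp
  | succ k ih =>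
    rw [List.range_succ, List.flatMap_append, List.length_append, ih]
    simp; omega

lemma pb_head? (f g : ℕ → ℕ) (m : ℕ) (hm : 0 < m) :
    ((List.range m).flatMap (fun j => [f j, g j])).head? = some (f 0) := by
  obtain ⟨k, rfl⟩ := Nat.exists_eq_add_of_lt hm
  rw [List.range_succ_eq_map]
  simp

lemma pb_getLast? (f g : ℕ → ℕ) (k : ℕ) :
    ((List.range (k + 1)).flatMap (fun j => [f j, g j])).getLast? = some (g k) := by
  rw [List.range_succ, List.flatMap_append, List.getLast?_append]
  simp

lemma pb_chain' (R : ℕ → ℕ → Prop) (f g : ℕ → ℕ) (m : ℕ)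
    (h1 : ∀ j < m, R (f j) (g j)) (h2 : ∀ j, j + 1 < m → R (g j) (f (j + 1))) :
    List.Chain' R ((List.range m).flatMap (fun j => [f j, g j])) := by
  induction m with
  | zero => exact List.isChain_nil
  | succ k ih =>
    dsimp only [List.Chain']
    rw [List.range_succ, List.flatMap_append, List.isChain_append]
    refine ⟨ih (fun j hj => h1 j (by omega)) (fun j hj => h2 j (by omega)), ?_, ?_⟩
    · simp only [List.flatMap_cons, List.flatMap_nil, List.append_nil]
      exact List.isChain_pair.mpr (h1 k (by omega))
    · intro x hx y hy
      rcases k with _ | k'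
      · simp at hx
      · rw [pb_getLast?] at hx
        simp only [List.flatMap_cons, List.flatMap_nil, List.append_nil,
          List.head?_cons, Option.mem_def, Option.some.injEq] at hx hy
        subst hx; subst hy
        exact h2 k' (by omega)

end PetalAux

/-- For any positive integer n, consecutive entries of the petal permutation
of T_{2n+1,2n+3}, viewed cyclically with indices mod 4n+5, differ by more
than 1 in absolute value: no two adjacent petals have adjacent levels. -/
theorem petalSeq_no_adjacent_levels (n : ℕ) (hn : 1 ≤ n) :
    ∀ i < 4 * n + 5,
      2 ≤ |((petalSeq n).getD i 0 : ℤ) -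
            ((petalSeq n).getD ((i + 1) % (4 * n + 5)) 0 : ℤ)| := by
  set R : ℕ → ℕ → Prop := fun a b => 2 ≤ |(a : ℤ) - (b : ℤ)| with hR
  have habs : ∀ a b : ℕ, (2 ≤ (a:ℤ) - b ∨ 2 ≤ (b:ℤ) - a) → R a b := by
    intro a b h
    rw [hR]; dsimp only
    rw [le_abs]; omega
  have hlen : (petalSeq n).length = 4 * n + 5 := by
    simp only [petalSeq, List.length_append, PetalAux.pb_length]
    simp; omega
  have hchain : List.Chain' R (petalSeq n) := by
    dsimp only [List.Chain']
    rw [petalSeq, List.isChain_append, List.isChain_append, List.isChain_append]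
    refine ⟨⟨⟨?_, ?_, ?_⟩, ?_, ?_⟩, ?_, ?_⟩
    · -- chain' [1, 3n+4]
      exact List.isChain_pair.mpr (habs 1 (3*n+4) (by omega))
    · -- chain' of first block
      apply PetalAux.pb_chain'
      · intro j hj; exact habs _ _ (by omega)
      · intro j hj; exact habs _ _ (by omega)
    · -- junction [1,3n+4] -- first block
      intro x hx y hy
      rw [PetalAux.pb_head? _ _ _ (by omega)] at hy
      simp at hx hy
      subst hx; subst hy
      exact habs _ _ (by omega)
    · -- chain' of second block
      apply PetalAux.pb_chain'
      · intro j hj; exact habs _ _ (by omega)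
      · intro j hj; exact habs _ _ (by omega)
    · -- junction first block -- second block
      intro x hx y hy
      rw [List.getLast?_append, PetalAux.pb_getLast?] at hx
      obtain ⟨k, rfl⟩ := Nat.exists_eq_add_of_lt hn
      rw [PetalAux.pb_head? _ _ _ (by omega)] at hy
      simp only [Option.some_or, Option.mem_def, Option.some.injEq] at hx hy
      subst hx; subst hy
      exact habs _ _ (by omega)
    · -- chain' [3n+5]
      simp
    · -- junction second block -- [3n+5]
      intro x hx y hy
      obtain ⟨k, rfl⟩ := Nat.exists_eq_add_of_lt hn
      rw [List.getLast?_append, List.getLast?_append, PetalAux.pb_getLast?] at hx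
      simp only [Option.some_or, Option.mem_def, Option.some.injEq,
        List.head?_cons] at hx hy
      subst hx; subst hy
      exact habs _ _ (by omega)
  intro i hi
  rcases Nat.lt_or_ge (i + 1) (4 * n + 5) with h | h
  · rw [Nat.mod_eq_of_lt h]
    have h1 : i < (petalSeq n).length := by omega
    have h2 : i + 1 < (petalSeq n).length := by omega
    rw [List.getD_eq_getElem _ _ h1, List.getD_eq_getElem _ _ h2]
    have := List.isChain_iff_getElem.mp hchain i (by omega)
    simpa [List.get_eq_getElem, hR] using this
  · have hi4 : i = 4 * n + 4 := by omega
    subst hi4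
    have : (4 * n + 4 + 1) % (4 * n + 5) = 0 := by
      rw [show 4 * n + 4 + 1 = 4 * n + 5 by ring, Nat.mod_self]
    rw [this]
    have hfront : ([1, 3 * n + 4] ++
        ((List.range (n + 1)).flatMap (fun j => [n + 2 - j, 3 * n + 3 - j])) ++
        ((List.range n).flatMap (fun j => [4 * n + 5 - j, 2 * n + 2 - j]))).length
        = 4 * n + 4 := by
      simp only [List.length_append, PetalAux.pb_length]
      simp; omega
    have hlast : (petalSeq n).getD (4 * n + 4) 0 = 3 * n + 5 := by
      rw [petalSeq, List.getD_append_right _ _ _ _ (by omega), hfront]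
      simp
    have hhead : (petalSeq n).getD 0 0 = 1 := by
      rw [petalSeq]; rfl
    rw [hlast, hhead]
    have := habs (3 * n + 5) 1 (by omega)
    simpa [hR] using this
end
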